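/- Let g be the 3-dimensional Lie algebra with basis {s, d₁, d₂} and brackets [s,d₁]=d₂, [s,d₂]=−d₁, [d₁,d₂]=0, and let r = a·s∧d₁ + b·s∧d₂ + c·d₁∧d₂ with coboundary ξ(x) = ad_x r. Then the following are equivalent: (i) ad_s² ξ(s) = 0; (ii) a = b = 0; (iii) [r,r] = 0. -/

import Mathlib

open ExteriorAlgebra

set_option maxHeartbeats 1600000 in
/-- For the 3-dimensional Lie algebra with basis `{s, d₁, d₂}`, brackets
`[s,d₁]=d₂`, `[s,d₂]=−d₁`, `[d₁,d₂]=0`, and `r = a·s∧d₁ + b·s∧d₂ + c·d₁∧d₂` with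
coboundary `ξ(x) = ad_x r`, the following are equivalent:
(i) `ad_s² ξ(s) = 0`; (ii) `a = b = 0`; (iii) `[r,r] = 0`. -/
theorem stmt_7 {L : Type*} [LieRing L] [LieAlgebra ℝ L]
    (s d1 d2 : L) (b : Module.Basis (Fin 3) ℝ L)
    (hb0 : b 0 = s) (hb1 : b 1 = d1) (hb2 : b 2 = d2)
    (h1 : ⁅s, d1⁆ = d2) (h2 : ⁅s, d2⁆ = -d1) (h3 : ⁅d1, d2⁆ = 0)
    -- the algebraic Schouten bracket on bivectors
    (S : ExteriorAlgebra ℝ L →ₗ[ℝ] ExteriorAlgebra ℝ L →ₗ[ℝ] ExteriorAlgebra ℝ L)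
    (hS : ∀ x1 x2 y1 y2 : L, S (ι ℝ x1 * ι ℝ x2) (ι ℝ y1 * ι ℝ y2) =
      ι ℝ ⁅x1, y1⁆ * ι ℝ x2 * ι ℝ y2 - ι ℝ ⁅x1, y2⁆ * ι ℝ x2 * ι ℝ y1
        - ι ℝ ⁅x2, y1⁆ * ι ℝ x1 * ι ℝ y2 + ι ℝ ⁅x2, y2⁆ * ι ℝ x1 * ι ℝ y1)
    -- the derivation extension of `ad` to bivectors
    (A : L →ₗ[ℝ] ExteriorAlgebra ℝ L →ₗ[ℝ] ExteriorAlgebra ℝ L)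
    (hA : ∀ x u v : L, A x (ι ℝ u * ι ℝ v) = ι ℝ ⁅x, u⁆ * ι ℝ v + ι ℝ u * ι ℝ ⁅x, v⁆)
    (a c e : ℝ) (r : ExteriorAlgebra ℝ L)
    (hr : r = a • (ι ℝ s * ι ℝ d1) + c • (ι ℝ s * ι ℝ d2) + e • (ι ℝ d1 * ι ℝ d2)) :
    (A s (A s (A s r)) = 0 ↔ (a = 0 ∧ c = 0)) ∧
      ((a = 0 ∧ c = 0) ↔ S r r = 0) := by
  -- nonvanishing of the top form
  have hT : ι ℝ s * ι ℝ d1 * ι ℝ d2 ≠ 0 := by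
    intro h
    have hv : ![s, d1, d2] = ⇑b := by
      funext i; fin_cases i <;> simp [hb0, hb1, hb2]
    have hm : ιMulti ℝ 3 ![s,d1,d2] = ι ℝ s * ι ℝ d1 * ι ℝ d2 := by
      simp [ιMulti_apply, List.ofFn_succ, mul_assoc]
    set f : ∀ i : ℕ, L [⋀^Fin i]→ₗ[ℝ] ℝ :=
      Function.update (fun i => (0 : L [⋀^Fin i]→ₗ[ℝ] ℝ)) 3 b.det with hf
    have h2 := liftAlternating_apply_ιMulti (R := ℝ) f ![s,d1,d2]
    rw [hm, h, map_zero] at h2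
    rw [hf] at h2
    simp only [Function.update_self] at h2
    rw [hv, Module.Basis.det_self] at h2
    exact one_ne_zero h2.symm
  have anti : ∀ x y : L, ι ℝ x * ι ℝ y = -(ι ℝ y * ι ℝ x) := fun x y =>
    eq_neg_of_add_eq_zero_left (ι_add_mul_swap x y)
  have sw : ∀ (x y : L) (t : ExteriorAlgebra ℝ L),
      ι ℝ x * (ι ℝ y * t) = -(ι ℝ y * (ι ℝ x * t)) := by
    intro x y t; rw [← mul_assoc, anti, neg_mul, mul_assoc]
  have q' : ∀ (x : L) (t : ExteriorAlgebra ℝ L), ι ℝ x * (ι ℝ x * t) = 0 := by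
    intro x t; rw [← mul_assoc, ι_sq_zero, zero_mul]
  have w1 := anti d1 s
  have w2 := anti d2 s
  have w3 := anti d2 d1
  have w1' := sw d1 s
  have w2' := sw d2 s
  have w3' := sw d2 d1
  -- bracket facts
  have h1' : ⁅d1, s⁆ = -d2 := by rw [← lie_skew, h1]
  have h2' : ⁅d2, s⁆ = d1 := by rw [← lie_skew, h2, neg_neg]
  have h3' : ⁅d2, d1⁆ = 0 := by rw [← lie_skew, h3, neg_zero]
  -- A computations
  have hAX : A s (ι ℝ s * ι ℝ d1) = ι ℝ s * ι ℝ d2 := by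
    rw [hA, lie_self, h1]; simp
  have hAY : A s (ι ℝ s * ι ℝ d2) = -(ι ℝ s * ι ℝ d1) := by
    rw [hA, lie_self, h2]; simp [mul_neg]
  have hAZ : A s (ι ℝ d1 * ι ℝ d2) = 0 := by
    rw [hA, h1, h2]
    simp only [map_neg, mul_neg, ι_sq_zero, neg_zero, add_zero, zero_add]
  have hA3 : A s (A s (A s r)) = c • (ι ℝ s * ι ℝ d1) - a • (ι ℝ s * ι ℝ d2) := by
    rw [hr]
    simp only [map_add, map_smul, hAX, hAY, hAZ, smul_neg, smul_zero, add_zero]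
    simp only [map_add, map_neg, map_smul, hAX, hAY, smul_neg, neg_neg]
    module
  -- S computations
  have hSXX : S (ι ℝ s * ι ℝ d1) (ι ℝ s * ι ℝ d1)
      = ι ℝ s * ι ℝ d1 * ι ℝ d2 + ι ℝ s * ι ℝ d1 * ι ℝ d2 := by
    rw [hS, lie_self, h1, h1', lie_self]
    simp only [map_zero, zero_mul, map_neg, neg_mul, sub_neg_eq_add, zero_sub, zero_add, mul_assoc,
      w1, w2, w3, w1', w2', w3', q', ι_sq_zero, mul_neg, neg_mul, neg_neg, mul_zero, zero_mul,
      add_zero]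
  have hSYY : S (ι ℝ s * ι ℝ d2) (ι ℝ s * ι ℝ d2)
      = ι ℝ s * ι ℝ d1 * ι ℝ d2 + ι ℝ s * ι ℝ d1 * ι ℝ d2 := by
    rw [hS, lie_self, h2, h2', lie_self]
    simp only [map_zero, zero_mul, map_neg, neg_mul, sub_neg_eq_add, zero_sub, zero_add, mul_assoc,
      w1, w2, w3, w1', w2', w3', q', ι_sq_zero, mul_neg, neg_mul, neg_neg, mul_zero, zero_mul,
      add_zero]
  have hSXY : S (ι ℝ s * ι ℝ d1) (ι ℝ s * ι ℝ d2) = 0 := by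
    rw [hS, lie_self, h2, h1', h3]
    simp only [map_zero, zero_mul, map_neg, neg_mul, sub_neg_eq_add, zero_sub, zero_add, mul_assoc,
      w1, w2, w3, w1', w2', w3', q', ι_sq_zero, mul_neg, neg_mul, neg_neg, mul_zero, zero_mul,
      add_zero, neg_zero, sub_zero, zero_add]
  have hSYX : S (ι ℝ s * ι ℝ d2) (ι ℝ s * ι ℝ d1) = 0 := by
    rw [hS, lie_self, h1, h2', h3']
    simp only [map_zero, zero_mul, map_neg, neg_mul, sub_neg_eq_add, zero_sub, zero_add, mul_assoc,
      w1, w2, w3, w1', w2', w3', q', ι_sq_zero, mul_neg, neg_mul, neg_neg, mul_zero, zero_mul,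
      add_zero, neg_zero, sub_zero, sub_self]
  have hSXZ : S (ι ℝ s * ι ℝ d1) (ι ℝ d1 * ι ℝ d2) = 0 := by
    rw [hS, h1, h2, lie_self, h3]
    simp only [map_zero, zero_mul, map_neg, neg_mul, sub_neg_eq_add, zero_sub, zero_add, mul_assoc,
      w1, w2, w3, w1', w2', w3', q', ι_sq_zero, mul_neg, neg_mul, neg_neg, mul_zero, zero_mul,
      add_zero, neg_zero, sub_zero, sub_self]
  have hSZX : S (ι ℝ d1 * ι ℝ d2) (ι ℝ s * ι ℝ d1) = 0 := by
    rw [hS, h1', lie_self, h2', h3']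
    simp only [map_zero, zero_mul, map_neg, neg_mul, sub_neg_eq_add, zero_sub, zero_add, mul_assoc,
      w1, w2, w3, w1', w2', w3', q', ι_sq_zero, mul_neg, neg_mul, neg_neg, mul_zero, zero_mul,
      add_zero, neg_zero, sub_zero, sub_self]
  have hSYZ : S (ι ℝ s * ι ℝ d2) (ι ℝ d1 * ι ℝ d2) = 0 := by
    rw [hS, h1, h2, h3', lie_self]
    simp only [map_zero, zero_mul, map_neg, neg_mul, sub_neg_eq_add, zero_sub, zero_add, mul_assoc,
      w1, w2, w3, w1', w2', w3', q', ι_sq_zero, mul_neg, neg_mul, neg_neg, mul_zero, zero_mul,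
      add_zero, neg_zero, sub_zero, sub_self]
  have hSZY : S (ι ℝ d1 * ι ℝ d2) (ι ℝ s * ι ℝ d2) = 0 := by
    rw [hS, h1', h3, h2', lie_self]
    simp only [map_zero, zero_mul, map_neg, neg_mul, sub_neg_eq_add, zero_sub, zero_add, mul_assoc,
      w1, w2, w3, w1', w2', w3', q', ι_sq_zero, mul_neg, neg_mul, neg_neg, mul_zero, zero_mul,
      add_zero, neg_zero, sub_zero, sub_self]
  have hSZZ : S (ι ℝ d1 * ι ℝ d2) (ι ℝ d1 * ι ℝ d2) = 0 := by
    rw [hS, lie_self, h3, h3', lie_self]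
    simp
  have hSrr : S r r = (2 * (a * a) + 2 * (c * c)) • (ι ℝ s * ι ℝ d1 * ι ℝ d2) := by
    rw [hr]
    simp only [map_add, map_smul, LinearMap.add_apply, LinearMap.smul_apply,
      hSXX, hSYY, hSXY, hSYX, hSXZ, hSZX, hSYZ, hSZY, hSZZ, smul_zero, add_zero, zero_add]
    module
  have hsz : ∀ (k : ℝ) (x : ExteriorAlgebra ℝ L), k • x = 0 → k ≠ 0 → x = 0 := by
    intro k x h hk
    have : k⁻¹ • (k • x) = 0 := by rw [h, smul_zero]
    rwa [smul_smul, inv_mul_cancel₀ hk, one_smul] at this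
  have hsz' : ∀ (k : ℝ) (x : ExteriorAlgebra ℝ L), k • x = 0 → x ≠ 0 → k = 0 := by
    intro k x h hx
    by_contra hk
    exact hx (hsz k x h hk)
  constructor
  · constructor
    · intro h0
      rw [hA3] at h0
      have hc : c • (ι ℝ s * ι ℝ d1 * ι ℝ d2) = 0 := by
        have := congrArg (· * ι ℝ d2) h0
        simpa only [sub_mul, smul_mul_assoc, mul_assoc, ι_sq_zero, mul_zero, smul_zero, sub_zero, zero_mul] using this
      have ha : a • (ι ℝ s * ι ℝ d1 * ι ℝ d2) = 0 := by
        have := congrArg (· * ι ℝ d1) h0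
        simpa only [sub_mul, smul_mul_assoc, mul_assoc, ι_sq_zero, mul_zero, smul_zero, zero_sub, sub_zero,
          w3, mul_neg, smul_neg, neg_neg, neg_eq_zero, zero_mul] using this
      exact ⟨hsz' _ _ ha hT, hsz' _ _ hc hT⟩
    · rintro ⟨ha, hc⟩
      rw [hA3, ha, hc]; simp
  · constructor
    · rintro ⟨ha, hc⟩
      rw [hSrr, ha, hc]; simp
    · intro h0
      rw [hSrr] at h0
      have := hsz' _ _ h0 hT
      constructor <;> nlinarith [sq_nonneg a, sq_nonneg c]
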